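/- If Φ(y,λ,c) is non-decreasing in c (A7), concave in λ for each fixed (y,c) (A9), and the dual problem has a globally optimal solution, then the domain of the penalty map c_*(·) is convex and the penalty map c_*(λ) = inf{c > 0 : (λ,c) is a globally optimal dual solution} is a quasiconvex function: c_*(αλ₁ + (1-α)λ₂) ≤ max{c_*(λ₁), c_*(λ₂)} for λ₁, λ₂ ∈ dom c_* and α ∈ [0,1]. -/

import Mathlib

open Filter Topology Metric Set

noncomputable section

variable {X Y : Type*} [NormedAddCommGroup X] [NormedSpace ℝ X]
  [NormedAddCommGroup Y] [NormedSpace ℝ Y]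

/-- Augmented Lagrangian `𝓛(x, λ, c) = f(x) + Φ(G(x), λ, c)`. -/
def lagr (f : X → EReal) (G : X → Y) (Φ : Y → (Y →L[ℝ] ℝ) → ℝ → EReal)
    (x : X) (l : Y →L[ℝ] ℝ) (c : ℝ) : EReal :=
  f x + Φ (G x) l c

/-- Augmented dual function `Θ(λ, c) = inf_{x ∈ Q} 𝓛(x, λ, c)`. -/
def theta (Q : Set X) (f : X → EReal) (G : X → Y)
    (Φ : Y → (Y →L[ℝ] ℝ) → ℝ → EReal) (l : Y →L[ℝ] ℝ) (c : ℝ) : EReal :=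
  ⨅ x ∈ Q, lagr f G Φ x l c

/-- Optimal value of the primal problem `min f(x) s.t. G(x) ∈ K, x ∈ Q`. -/
def primalVal (Q : Set X) (K : Set Y) (f : X → EReal) (G : X → Y) : EReal :=
  ⨅ x ∈ {x ∈ Q | G x ∈ K}, f x

/-- Optimal value of the dual problem `max Θ(λ, c) over λ ∈ Λ, c > 0`. -/
def dualVal (Q : Set X) (Λ : Set (Y →L[ℝ] ℝ)) (f : X → EReal) (G : X → Y)
    (Φ : Y → (Y →L[ℝ] ℝ) → ℝ → EReal) : EReal :=
  ⨆ l ∈ Λ, ⨆ c ∈ Ioi (0 : ℝ), theta Q f G Φ l c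

/-- `(l, c)` is a globally optimal solution of the dual problem. -/
def DualOpt (Q : Set X) (Λ : Set (Y →L[ℝ] ℝ)) (f : X → EReal) (G : X → Y)
    (Φ : Y → (Y →L[ℝ] ℝ) → ℝ → EReal) (l : Y →L[ℝ] ℝ) (c : ℝ) : Prop :=
  l ∈ Λ ∧ 0 < c ∧ ∀ l' ∈ Λ, ∀ c' > (0 : ℝ), theta Q f G Φ l' c' ≤ theta Q f G Φ l c

/-- The saddle point inequalities hold for every `c ≥ c₀`. -/
def SaddleFrom (Q : Set X) (Λ : Set (Y →L[ℝ] ℝ)) (f : X → EReal) (G : X → Y)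
    (Φ : Y → (Y →L[ℝ] ℝ) → ℝ → EReal) (x₀ : X) (l₀ : Y →L[ℝ] ℝ) (c₀ : ℝ) : Prop :=
  ∀ c ≥ c₀, (⨆ l ∈ Λ, lagr f G Φ x₀ l c) ≤ lagr f G Φ x₀ l₀ c ∧
    lagr f G Φ x₀ l₀ c ≤ (⨅ x ∈ Q, lagr f G Φ x l₀ c) ∧
    (⨅ x ∈ Q, lagr f G Φ x l₀ c) < ⊤

/-- `(x₀, l₀)` is a global saddle point of the augmented Lagrangian. -/
def SaddlePt (Q : Set X) (Λ : Set (Y →L[ℝ] ℝ)) (f : X → EReal) (G : X → Y)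
    (Φ : Y → (Y →L[ℝ] ℝ) → ℝ → EReal) (x₀ : X) (l₀ : Y →L[ℝ] ℝ) : Prop :=
  x₀ ∈ Q ∧ l₀ ∈ Λ ∧ ∃ c₀ > (0 : ℝ), SaddleFrom Q Λ f G Φ x₀ l₀ c₀

/-- The least exact penalty parameter `c_*(x₀, l₀)` of a global saddle point. -/
def saddleCStar (Q : Set X) (Λ : Set (Y →L[ℝ] ℝ)) (f : X → EReal) (G : X → Y)
    (Φ : Y → (Y →L[ℝ] ℝ) → ℝ → EReal) (x₀ : X) (l₀ : Y →L[ℝ] ℝ) : ℝ :=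
  sInf {c₀ : ℝ | 0 < c₀ ∧ SaddleFrom Q Λ f G Φ x₀ l₀ c₀}

/-- `x₀` is a globally optimal solution of the primal problem. -/
def PrimalOpt (Q : Set X) (K : Set Y) (f : X → EReal) (G : X → Y) (x₀ : X) : Prop :=
  x₀ ∈ Q ∧ G x₀ ∈ K ∧ ∀ x ∈ Q, G x ∈ K → f x₀ ≤ f x

/-- The penalty map `c_*(λ) = inf {c > 0 : (λ,c) is a globally optimal dual solution}`,
with value `⊤` when no such `c` exists. -/
def penaltyMap (Q : Set X) (Λ : Set (Y →L[ℝ] ℝ)) (f : X → EReal) (G : X → Y)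
    (Φ : Y → (Y →L[ℝ] ℝ) → ℝ → EReal) (l : Y →L[ℝ] ℝ) : EReal :=
  sInf (Real.toEReal '' {c : ℝ | DualOpt Q Λ f G Φ l c})


section Aux

variable {X Y : Type*} [NormedAddCommGroup X] [NormedSpace ℝ X]
  [NormedAddCommGroup Y] [NormedSpace ℝ Y]

lemma theta_mono_c (Q : Set X) (Λ : Set (Y →L[ℝ] ℝ)) (f : X → EReal) (G : X → Y)
    (Φ : Y → (Y →L[ℝ] ℝ) → ℝ → EReal)
    (hA7 : ∀ y : Y, ∀ l ∈ Λ, ∀ c₁ c₂ : ℝ, 0 < c₁ → c₁ ≤ c₂ → Φ y l c₁ ≤ Φ y l c₂)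
    {l : Y →L[ℝ] ℝ} (hl : l ∈ Λ) {c₁ c₂ : ℝ} (hc₁ : 0 < c₁) (hle : c₁ ≤ c₂) :
    theta Q f G Φ l c₁ ≤ theta Q f G Φ l c₂ := by
  refine iInf₂_mono fun x hx => ?_
  exact add_le_add_right (hA7 (G x) l hl c₁ c₂ hc₁ hle) (f x)

lemma dualOpt_max (Q : Set X) (Λ : Set (Y →L[ℝ] ℝ)) (f : X → EReal) (G : X → Y)
    (Φ : Y → (Y →L[ℝ] ℝ) → ℝ → EReal)
    (hΛconv : Convex ℝ Λ)
    (hA7 : ∀ y : Y, ∀ l ∈ Λ, ∀ c₁ c₂ : ℝ, 0 < c₁ → c₁ ≤ c₂ → Φ y l c₁ ≤ Φ y l c₂)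
    (hA9 : ∀ (y : Y) (c : ℝ), 0 < c → ∀ l₁ ∈ Λ, ∀ l₂ ∈ Λ, ∀ a b : ℝ, 0 ≤ a → 0 ≤ b →
      a + b = 1 →
      (a : EReal) * Φ y l₁ c + (b : EReal) * Φ y l₂ c ≤ Φ y (a • l₁ + b • l₂) c)
    {l₁ l₂ : Y →L[ℝ] ℝ} {c₁ c₂ : ℝ}
    (h₁ : DualOpt Q Λ f G Φ l₁ c₁) (h₂ : DualOpt Q Λ f G Φ l₂ c₂)
    {a b : ℝ} (ha : 0 ≤ a) (hb : 0 ≤ b) (hab : a + b = 1) :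
    DualOpt Q Λ f G Φ (a • l₁ + b • l₂) (max c₁ c₂) := by
  obtain ⟨hl₁, hc₁, hopt₁⟩ := h₁
  obtain ⟨hl₂, hc₂, hopt₂⟩ := h₂
  set c := max c₁ c₂ with hc
  have hcpos : (0:ℝ) < c := lt_of_lt_of_le hc₁ (le_max_left _ _)
  have hl₀ : a • l₁ + b • l₂ ∈ Λ := hΛconv hl₁ hl₂ ha hb hab
  refine ⟨hl₀, hcpos, fun l' hl' c' hc' => ?_⟩
  -- theta lᵢ c ≥ theta lᵢ cᵢ ≥ theta l' c'
  have key₁ : theta Q f G Φ l' c' ≤ theta Q f G Φ l₁ c :=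
    (hopt₁ l' hl' c' hc').trans (theta_mono_c Q Λ f G Φ hA7 hl₁ hc₁ (le_max_left _ _))
  have key₂ : theta Q f G Φ l' c' ≤ theta Q f G Φ l₂ c :=
    (hopt₂ l' hl' c' hc').trans (theta_mono_c Q Λ f G Φ hA7 hl₂ hc₂ (le_max_right _ _))
  have hmin : theta Q f G Φ l' c' ≤
      min (theta Q f G Φ l₁ c) (theta Q f G Φ l₂ c) := le_min key₁ key₂
  refine hmin.trans ?_
  refine le_iInf₂ fun x hx => ?_
  have hx₁ : theta Q f G Φ l₁ c ≤ lagr f G Φ x l₁ c := iInf₂_le x hx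
  have hx₂ : theta Q f G Φ l₂ c ≤ lagr f G Φ x l₂ c := iInf₂_le x hx
  have step1 : min (theta Q f G Φ l₁ c) (theta Q f G Φ l₂ c) ≤
      min (lagr f G Φ x l₁ c) (lagr f G Φ x l₂ c) := min_le_min hx₁ hx₂
  refine step1.trans ?_
  have hdist : min (lagr f G Φ x l₁ c) (lagr f G Φ x l₂ c)
      = f x + min (Φ (G x) l₁ c) (Φ (G x) l₂ c) := min_add_add_left _ _ _
  rw [hdist]
  refine add_le_add_right ?_ (f x)
  set p := Φ (G x) l₁ c
  set q := Φ (G x) l₂ c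
  have hconv : (a : EReal) * p + (b : EReal) * q ≤ Φ (G x) (a • l₁ + b • l₂) c :=
    hA9 (G x) c hcpos l₁ hl₁ l₂ hl₂ a b ha hb hab
  refine le_trans ?_ hconv
  have hmin₁ : min p q ≤ p := min_le_left _ _
  have hmin₂ : min p q ≤ q := min_le_right _ _
  have h1 : (a : EReal) * min p q ≤ (a : EReal) * p :=
    mul_le_mul_of_nonneg_left hmin₁ (by exact_mod_cast ha)
  have h2 : (b : EReal) * min p q ≤ (b : EReal) * q :=
    mul_le_mul_of_nonneg_left hmin₂ (by exact_mod_cast hb)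
  calc min p q = (1 : EReal) * min p q := (one_mul _).symm
    _ = ((a : EReal) + (b : EReal)) * min p q := by
        rw [← EReal.coe_add, hab, EReal.coe_one]
    _ = (a : EReal) * min p q + (b : EReal) * min p q :=
        EReal.right_distrib_of_nonneg (by exact_mod_cast ha) (by exact_mod_cast hb)
    _ ≤ (a : EReal) * p + (b : EReal) * q := add_le_add h1 h2

end Aux

/-- Under (A7) and (A9), if the dual problem has a globally optimal solution, then
the domain of the penalty map is convex and the penalty map is quasiconvex. -/
theorem penaltyMap_quasiconvex
    (Q : Set X) (Λ : Set (Y →L[ℝ] ℝ))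
    (f : X → EReal) (G : X → Y) (Φ : Y → (Y →L[ℝ] ℝ) → ℝ → EReal)
    (hΛconv : Convex ℝ Λ)
    (hA7 : ∀ y : Y, ∀ l ∈ Λ, ∀ c₁ c₂ : ℝ, 0 < c₁ → c₁ ≤ c₂ → Φ y l c₁ ≤ Φ y l c₂)
    (hA9 : ∀ (y : Y) (c : ℝ), 0 < c → ∀ l₁ ∈ Λ, ∀ l₂ ∈ Λ, ∀ a b : ℝ, 0 ≤ a → 0 ≤ b →
      a + b = 1 →
      (a : EReal) * Φ y l₁ c + (b : EReal) * Φ y l₂ c ≤ Φ y (a • l₁ + b • l₂) c)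
    (hex : ∃ l c, DualOpt Q Λ f G Φ l c) :
    Convex ℝ {l : Y →L[ℝ] ℝ | ∃ c, DualOpt Q Λ f G Φ l c} ∧
      ∀ l₁ ∈ {l : Y →L[ℝ] ℝ | ∃ c, DualOpt Q Λ f G Φ l c},
        ∀ l₂ ∈ {l : Y →L[ℝ] ℝ | ∃ c, DualOpt Q Λ f G Φ l c},
          ∀ a b : ℝ, 0 ≤ a → 0 ≤ b → a + b = 1 →
            penaltyMap Q Λ f G Φ (a • l₁ + b • l₂) ≤
              max (penaltyMap Q Λ f G Φ l₁) (penaltyMap Q Λ f G Φ l₂) := by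
  constructor
  · rintro x ⟨cx, hx⟩ y ⟨cy, hy⟩ a b ha hb hab
    exact ⟨max cx cy, dualOpt_max Q Λ f G Φ hΛconv hA7 hA9 hx hy ha hb hab⟩
  · rintro l₁ ⟨c₁', h₁'⟩ l₂ ⟨c₂', h₂'⟩ a b ha hb hab
    by_contra hlt
    push_neg at hlt
    have hM : max (penaltyMap Q Λ f G Φ l₁) (penaltyMap Q Λ f G Φ l₂) <
        penaltyMap Q Λ f G Φ (a • l₁ + b • l₂) := hlt
    have h₁lt : penaltyMap Q Λ f G Φ l₁ < penaltyMap Q Λ f G Φ (a • l₁ + b • l₂) :=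
      lt_of_le_of_lt (le_max_left _ _) hM
    have h₂lt : penaltyMap Q Λ f G Φ l₂ < penaltyMap Q Λ f G Φ (a • l₁ + b • l₂) :=
      lt_of_le_of_lt (le_max_right _ _) hM
    rw [penaltyMap, sInf_lt_iff] at h₁lt h₂lt
    obtain ⟨e₁, ⟨c₁, hc₁, rfl⟩, hlt₁⟩ := h₁lt
    obtain ⟨e₂, ⟨c₂, hc₂, rfl⟩, hlt₂⟩ := h₂lt
    have hopt : DualOpt Q Λ f G Φ (a • l₁ + b • l₂) (max c₁ c₂) :=
      dualOpt_max Q Λ f G Φ hΛconv hA7 hA9 hc₁ hc₂ ha hb hab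
    have hmem : (Real.toEReal (max c₁ c₂)) ∈
        Real.toEReal '' {c : ℝ | DualOpt Q Λ f G Φ (a • l₁ + b • l₂) c} :=
      ⟨max c₁ c₂, hopt, rfl⟩
    have hle : penaltyMap Q Λ f G Φ (a • l₁ + b • l₂) ≤ Real.toEReal (max c₁ c₂) :=
      sInf_le hmem
    have : Real.toEReal (max c₁ c₂) < penaltyMap Q Λ f G Φ (a • l₁ + b • l₂) := by
      rcases max_cases c₁ c₂ with ⟨h, _⟩ | ⟨h, _⟩ <;> rw [h]
      · exact hlt₁
      · exact hlt₂
    exact absurd (hle.trans_lt this) (lt_irrefl _)
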